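/- Let V and S be disjoint finite sets, W = V ∪ S, and let f : W × W → ℝ be a feasible districting flow, i.e.: (i) f(a, b) ≥ 0 for all a, b ∈ W; (ii) f(a, s) = 0 whenever s ∈ S; (iii) for every v ∈ V, Σ_{a∈W} f(a, v) − Σ_{b∈W} f(v, b) = 1; (iv) for every v ∈ V there is at most one a ∈ W with f(a, v) > 0. For s ∈ S, let D_s = {v ∈ V : there is a finite chain v = w₀, …, w_m with f(w_{j+1}, w_j) > 0 for j < m and w_m = s}. Then for every s ∈ S, Σ_{v∈V} f(s, v) = |D_s|: the total flow supplied by each source equals the number of basic units in its district. Consequently, if the model constraints n_L ≤ Σ_{v∈V} f(s, v) ≤ n_U hold, then n_L ≤ |D_s| ≤ n_U. -/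

import Mathlib

/-- In a feasible districting flow on `W = V ⊕ S`, the total flow supplied by a
source `s` equals the number of basic units in its district
`D_s = {v : flow of v originates from s}`; consequently, if the model
constraints `n_L ≤ ∑_{v} f(s, v) ≤ n_U` hold then `n_L ≤ |D_s| ≤ n_U`. -/
theorem source_flow_eq_district_size {V S : Type*} [Fintype V] [Fintype S]
    (f : (V ⊕ S) → (V ⊕ S) → ℝ)
    (hnonneg : ∀ a b : V ⊕ S, 0 ≤ f a b)
    (hnoSourceIn : ∀ (a : V ⊕ S) (s : S), f a (Sum.inr s) = 0)
    (hbal : ∀ v : V, (∑ a, f a (Sum.inl v)) - (∑ b, f (Sum.inl v) b) = 1)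
    (huniq : ∀ (v : V) (a₁ a₂ : V ⊕ S),
      0 < f a₁ (Sum.inl v) → 0 < f a₂ (Sum.inl v) → a₁ = a₂)
    (s : S) :
    (∑ v : V, f (Sum.inr s) (Sum.inl v)) =
      ({v : V | ∃ (m : ℕ) (w : ℕ → V ⊕ S),
        w 0 = Sum.inl v ∧ (∀ j < m, 0 < f (w (j + 1)) (w j)) ∧
        w m = Sum.inr s} : Set V).ncard ∧
    ∀ nL nU : ℝ,
      nL ≤ (∑ v : V, f (Sum.inr s) (Sum.inl v)) →
      (∑ v : V, f (Sum.inr s) (Sum.inl v)) ≤ nU →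
      nL ≤ ({v : V | ∃ (m : ℕ) (w : ℕ → V ⊕ S),
          w 0 = Sum.inl v ∧ (∀ j < m, 0 < f (w (j + 1)) (w j)) ∧
          w m = Sum.inr s} : Set V).ncard ∧
        (({v : V | ∃ (m : ℕ) (w : ℕ → V ⊕ S),
          w 0 = Sum.inl v ∧ (∀ j < m, 0 < f (w (j + 1)) (w j)) ∧
          w m = Sum.inr s} : Set V).ncard : ℝ) ≤ nU := by
  classical
  set D : Set V := {v : V | ∃ (m : ℕ) (w : ℕ → V ⊕ S),
      w 0 = Sum.inl v ∧ (∀ j < m, 0 < f (w (j + 1)) (w j)) ∧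
      w m = Sum.inr s} with hD
  have hfin : D.Finite := Set.toFinite D
  set DF := hfin.toFinset with hDF
  have hmem : ∀ v, v ∈ DF ↔ v ∈ D := fun v => hfin.mem_toFinset
  -- the unique parent of a member of D is the source s or another member of D
  have step : ∀ v, v ∈ D → ∀ a, 0 < f a (Sum.inl v) →
      a = Sum.inr s ∨ ∃ u, a = Sum.inl u ∧ u ∈ D := by
    rintro v ⟨m, w, hw0, hpos, hwm⟩ a ha
    cases m with
    | zero => rw [hw0] at hwm; exact absurd hwm (by simp)
    | succ k =>
      have h1 : 0 < f (w 1) (w 0) := hpos 0 (Nat.succ_pos k)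
      rw [hw0] at h1
      have haw : a = w 1 := huniq v a (w 1) ha h1
      cases hw1 : w 1 with
      | inl u =>
        right
        exact ⟨u, haw.trans hw1, k, fun j => w (j + 1), hw1,
          fun j hj => hpos (j + 1) (Nat.succ_lt_succ hj), hwm⟩
      | inr s' =>
        left
        cases k with
        | zero => rw [haw]; exact hwm
        | succ k' =>
          exfalso
          have h2 : 0 < f (w 2) (w 1) := hpos 1 (by omega)
          rw [hw1, hnoSourceIn] at h2
          exact lt_irrefl 0 h2
  -- forward closure
  have fwd : ∀ v u, v ∈ D → 0 < f (Sum.inl v) (Sum.inl u) → u ∈ D := by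
    rintro v u ⟨m, w, hw0, hpos, hwm⟩ hf
    refine ⟨m + 1, fun j => if j = 0 then Sum.inl u else w (j - 1), by simp, ?_, by simp [hwm]⟩
    intro j hj
    cases j with
    | zero => simpa [hw0] using hf
    | succ i => simpa using hpos i (by omega)
  -- direct children of the source are in D
  have src : ∀ v, 0 < f (Sum.inr s) (Sum.inl v) → v ∈ D := by
    intro v hf
    refine ⟨1, fun j => if j = 0 then Sum.inl v else Sum.inr s, by simp, ?_, by simp⟩
    intro j hj
    interval_cases j
    simpa using hf
  have zero1 : ∀ v ∈ D, ∀ s', s' ≠ s → f (Sum.inr s') (Sum.inl v) = 0 := by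
    intro v hv s' hs'
    by_contra h
    have hpos : 0 < f (Sum.inr s') (Sum.inl v) := lt_of_le_of_ne (hnonneg _ _) (Ne.symm h)
    rcases step v hv _ hpos with h1 | ⟨u, h1, _⟩
    · exact hs' (Sum.inr.inj h1)
    · exact nomatch h1
  have zero2 : ∀ v ∈ D, ∀ u, u ∉ D → f (Sum.inl u) (Sum.inl v) = 0 := by
    intro v hv u hu
    by_contra h
    have hpos : 0 < f (Sum.inl u) (Sum.inl v) := lt_of_le_of_ne (hnonneg _ _) (Ne.symm h)
    rcases step v hv _ hpos with h1 | ⟨u', h1, hu'⟩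
    · exact nomatch h1
    · exact hu (Sum.inl.inj h1 ▸ hu')
  have zero3 : ∀ v ∈ D, ∀ u, u ∉ D → f (Sum.inl v) (Sum.inl u) = 0 := by
    intro v hv u hu
    by_contra h
    exact hu (fwd v u hv (lt_of_le_of_ne (hnonneg _ _) (Ne.symm h)))
  have key : (∑ v : V, f (Sum.inr s) (Sum.inl v)) = (DF.card : ℝ) := by
    have hrestrict : (∑ v : V, f (Sum.inr s) (Sum.inl v))
        = ∑ v ∈ DF, f (Sum.inr s) (Sum.inl v) := by
      symm
      apply Finset.sum_subset (Finset.subset_univ _)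
      intro v _ hv
      by_contra h
      exact hv ((hmem v).mpr (src v (lt_of_le_of_ne (hnonneg _ _) (Ne.symm h))))
    have hin : ∀ v ∈ DF, (∑ a, f a (Sum.inl v)) =
        (∑ u ∈ DF, f (Sum.inl u) (Sum.inl v)) + f (Sum.inr s) (Sum.inl v) := by
      intro v hv
      have hvD := (hmem v).mp hv
      rw [Fintype.sum_sum_type]
      congr 1
      · symm
        apply Finset.sum_subset (Finset.subset_univ _)
        intro u _ hu
        exact zero2 v hvD u (fun h => hu ((hmem u).mpr h))
      · exact Finset.sum_eq_single s (fun s' _ hs' => zero1 v hvD s' hs') (by simp)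
    have hout : ∀ v ∈ DF, (∑ b, f (Sum.inl v) b) =
        ∑ u ∈ DF, f (Sum.inl v) (Sum.inl u) := by
      intro v hv
      have hvD := (hmem v).mp hv
      rw [Fintype.sum_sum_type]
      have h0 : (∑ s' : S, f (Sum.inl v) (Sum.inr s')) = 0 := by simp [hnoSourceIn]
      rw [h0, add_zero]
      symm
      apply Finset.sum_subset (Finset.subset_univ _)
      intro u _ hu
      exact zero3 v hvD u (fun h => hu ((hmem u).mpr h))
    have hcard : (DF.card : ℝ)
        = ∑ v ∈ DF, ((∑ a, f a (Sum.inl v)) - (∑ b, f (Sum.inl v) b)) := by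
      rw [Finset.sum_congr rfl (fun v _ => hbal v)]
      simp
    rw [hrestrict, hcard]
    conv_rhs => rw [Finset.sum_congr rfl (fun v hv => by rw [hin v hv, hout v hv])]
    have hcomm : (∑ v ∈ DF, ∑ u ∈ DF, f (Sum.inl u) (Sum.inl v))
        = ∑ v ∈ DF, ∑ u ∈ DF, f (Sum.inl v) (Sum.inl u) := Finset.sum_comm
    simp only [Finset.sum_sub_distrib, Finset.sum_add_distrib]
    rw [hcomm]
    ring
  have hcardeq : (D.ncard : ℝ) = (DF.card : ℝ) := by
    rw [Set.ncard_eq_toFinset_card D hfin]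
  have key' : (∑ v : V, f (Sum.inr s) (Sum.inl v)) = (D.ncard : ℝ) := by
    rw [key, hcardeq]
  exact ⟨key', fun nL nU h1 h2 => ⟨by rw [← key']; exact h1, by rw [← key']; exact h2⟩⟩
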